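/- For every natural number m ≥ 1 and all real numbers a and t such that sin(2m·a·t) ≠ 0, we have −2m·cot(2m·a·t) = Σ_{j=0}^{2m−1} tan(a·t + jπ/(2m)). (This is the λ → 0 limit of the degenerate tangent multiple angle formula; the hypothesis guarantees every summand is defined.) -/

import Mathlib

open Real

open Polynomial Finset


lemma derivative_finset_prod {ι : Type*} [DecidableEq ι] (s : Finset ι) (f : ι → Polynomial ℂ) :
    Polynomial.derivative (∏ i ∈ s, f i)
      = ∑ i ∈ s, (∏ j ∈ s.erase i, f j) * Polynomial.derivative (f i) := by
  classical
  induction s using Finset.induction_on with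
  | empty => simp
  | @insert a s ha ih =>
    rw [Finset.prod_insert ha, derivative_mul, Finset.sum_insert ha, ih,
      Finset.erase_insert ha, Finset.mul_sum, mul_comm (Polynomial.derivative (f a))]
    congr 1
    refine Finset.sum_congr rfl fun i hi => ?_
    rw [Finset.erase_insert_of_ne (by rintro rfl; exact ha hi),
      Finset.prod_insert (fun h => ha (Finset.mem_of_mem_erase h))]
    ring


-- L1: derivative trick
lemma sum_inv_sub_root (n : ℕ) (hn : 0 < n) (ξ q : ℂ) (hξ : IsPrimitiveRoot ξ n)
    (hq : q ^ n ≠ 1) :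
    ∑ k ∈ range n, (q - ξ ^ k)⁻¹ = n * q ^ (n - 1) / (q ^ n - 1) := by
  have hprod : (X ^ n - C (1:ℂ)) = ∏ i ∈ range n, (X - C (ξ ^ i)) := by
    simpa using X_pow_sub_C_eq_prod hξ hn (one_pow n)
  have hne : ∀ k ∈ range n, q - ξ ^ k ≠ 0 := by
    intro k hk
    intro h
    apply hq
    have : q = ξ ^ k := by linear_combination h
    rw [this, ← pow_mul, mul_comm, pow_mul, hξ.pow_eq_one, one_pow]
  have hden : (q ^ n - 1) ≠ 0 := sub_ne_zero.mpr hq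
  have hprodeval : ∏ j ∈ range n, (q - ξ ^ j) = q ^ n - 1 := by
    have := congrArg (Polynomial.eval q) hprod
    simpa [eval_prod] using this.symm
  have hder : ∑ k ∈ range n, ∏ j ∈ (range n).erase k, (q - ξ ^ j) = n * q ^ (n - 1) := by
    have := congrArg (Polynomial.eval q) (congrArg Polynomial.derivative hprod)
    rw [derivative_finset_prod] at this
    simp only [derivative_sub, derivative_pow, derivative_X, derivative_C, sub_zero,
      mul_one, eval_finset_sum, eval_sub, eval_X, eval_C, eval_mul, eval_pow,
      eval_natCast, eval_one, eval_prod] at this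
    simpa [eval_prod] using this.symm
  rw [eq_div_iff hden, ← hder, Finset.sum_mul]
  refine Finset.sum_congr rfl fun k hk => ?_
  rw [← hprodeval, ← Finset.mul_prod_erase _ _ hk, inv_mul_cancel_left₀ (hne k hk)]

lemma cot_ratio_aux (E : ℂ) (hE : E ≠ 1) :
    (E + 1) / (Complex.I * (1 - E)) = Complex.I + 2 * Complex.I / (E - 1) := by
  have h1 : E - 1 ≠ 0 := sub_ne_zero.mpr hE
  have h2 : (1 : ℂ) - E ≠ 0 := sub_ne_zero.mpr (Ne.symm hE)
  field_simp
  ring_nf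
  linear_combination (E^2 - 1) * Complex.I_sq

lemma sum_cot_c (n : ℕ) (hn : 0 < n) (x : ℂ)
    (h : Complex.exp (2 * Complex.I * (n * x)) ≠ 1) :
    ∑ k ∈ range n, Complex.cot (x + k * (Real.pi : ℂ) / n)
      = n * Complex.cot (n * x) := by
  have hζ : IsPrimitiveRoot (Complex.exp (2 * (Real.pi : ℂ) * Complex.I / n)) n :=
    Complex.isPrimitiveRoot_exp n hn.ne'
  set ζ : ℂ := Complex.exp (2 * (Real.pi : ℂ) * Complex.I / n) with hζdef
  set ξ : ℂ := ζ⁻¹ with hξdef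
  have hξ : IsPrimitiveRoot ξ n := hζ.inv
  set q : ℂ := Complex.exp (2 * Complex.I * x) with hqdef
  have hqn : q ^ n = Complex.exp (2 * Complex.I * (n * x)) := by
    rw [hqdef, ← Complex.exp_nat_mul]
    ring_nf
  have hq : q ^ n ≠ 1 := by rw [hqn]; exact h
  have hζn : ζ ^ n = 1 := hζ.pow_eq_one
  have hξn : ξ ^ n = 1 := hξ.pow_eq_one
  have hζ0 : ζ ≠ 0 := Complex.exp_ne_zero _
  have hknot : ∀ k : ℕ, q * ζ ^ k ≠ 1 := by
    intro k hk
    apply hq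
    have h2 : (q * ζ ^ k) ^ n = 1 := by rw [hk, one_pow]
    rw [mul_pow, ← pow_mul, mul_comm k n, pow_mul, hζn, one_pow, mul_one] at h2
    exact h2
  have hden : ∀ k : ℕ, q - ξ ^ k ≠ 0 := by
    intro k hk
    apply hq
    have : q = ξ ^ k := by linear_combination hk
    rw [this, ← pow_mul, mul_comm k n, pow_mul, hξn, one_pow]
  have hterm : ∀ k ∈ range n, Complex.cot (x + k * (Real.pi : ℂ) / n)
      = Complex.I + 2 * Complex.I * (ξ ^ k / (q - ξ ^ k)) := by
    intro k _
    have hE : Complex.exp (2 * Complex.I * (x + k * (Real.pi : ℂ) / n)) = q * ζ ^ k := by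
      have h2 : q * ζ ^ k
          = Complex.exp (2 * Complex.I * x + k * (2 * (Real.pi : ℂ) * Complex.I / n)) := by
        rw [Complex.exp_add, Complex.exp_nat_mul]
      rw [h2]
      congr 1
      ring
    rw [Complex.cot_eq_exp_ratio, hE, cot_ratio_aux _ (hknot k)]
    congr 1
    have hmul : ξ ^ k * ζ ^ k = 1 := by
      rw [hξdef, ← mul_pow, inv_mul_cancel₀ hζ0, one_pow]
    have hadj : ξ ^ k * (q * ζ ^ k - 1) = q - ξ ^ k := by
      linear_combination q * hmul
    have h1 : q * ζ ^ k - 1 ≠ 0 := sub_ne_zero.mpr (hknot k)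
    rw [← mul_div_assoc, div_eq_div_iff h1 (hden k)]
    linear_combination 2 * Complex.I * hadj - 4 * Complex.I * q * hmul
  rw [Finset.sum_congr rfl hterm]
  have hsum1 : ∑ k ∈ range n, (Complex.I + 2 * Complex.I * (ξ ^ k / (q - ξ ^ k)))
      = n * Complex.I + 2 * Complex.I * ∑ k ∈ range n, ξ ^ k / (q - ξ ^ k) := by
    rw [Finset.sum_add_distrib, Finset.sum_const, card_range, ← Finset.mul_sum, nsmul_eq_mul]
  have hsplit : ∀ k ∈ range n, ξ ^ k / (q - ξ ^ k) = q * (q - ξ ^ k)⁻¹ - 1 := by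
    intro k hk
    rw [div_eq_iff (hden k), sub_mul, mul_assoc, inv_mul_cancel₀ (hden k), mul_one, one_mul]
    ring
  have hsum2 : ∑ k ∈ range n, ξ ^ k / (q - ξ ^ k)
      = q * (n * q ^ (n - 1) / (q ^ n - 1)) - n := by
    rw [Finset.sum_congr rfl hsplit, Finset.sum_sub_distrib, ← Finset.mul_sum,
      sum_inv_sub_root n hn ξ q hξ hq, Finset.sum_const, card_range, nsmul_eq_mul, mul_one]
  have hcot : Complex.cot (n * x) = Complex.I + 2 * Complex.I / (q ^ n - 1) := by
    rw [Complex.cot_eq_exp_ratio, ← hqn, cot_ratio_aux _ hq]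
  rw [hsum1, hsum2, hcot]
  have hne1 : q ^ n - 1 ≠ 0 := sub_ne_zero.mpr hq
  have hpow : q * q ^ (n - 1) = q ^ n := by
    rw [← pow_succ']
    congr 1
    omega
  field_simp
  linear_combination 2 * n * hpow


lemma exp_two_I_ne_one (u : ℝ) (h : Real.sin u ≠ 0) :
    Complex.exp (2 * Complex.I * u) ≠ 1 := by
  intro he
  apply h
  have h2 : Complex.exp ((u : ℂ) * Complex.I) = Complex.exp (-(u : ℂ) * Complex.I) := by
    rw [show ((u : ℂ) * Complex.I) = (-(u : ℂ) * Complex.I) + 2 * Complex.I * u by ring,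
      Complex.exp_add, he, mul_one]
  have h3 : Complex.sin u = 0 := by
    rw [Complex.sin, ← h2]
    simp
  have h4 : (Real.sin u : ℂ) = 0 := by rw [Complex.ofReal_sin, h3]
  exact_mod_cast h4

lemma sum_cot_r (n : ℕ) (hn : 0 < n) (x : ℝ) (h : Real.sin (n * x) ≠ 0) :
    ∑ k ∈ range n, Real.cot (x + k * Real.pi / n) = n * Real.cot (n * x) := by
  have hc : Complex.exp (2 * Complex.I * ((n : ℂ) * (x : ℂ))) ≠ 1 := by
    have h2 := exp_two_I_ne_one ((n : ℝ) * x) h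
    have h3 : (((n : ℝ) * x : ℝ) : ℂ) = (n : ℂ) * (x : ℂ) := by push_cast; ring
    rwa [h3] at h2
  have hmain := sum_cot_c n hn x hc
  apply Complex.ofReal_injective
  push_cast [Complex.ofReal_cot]
  exact hmain

lemma cot_add_pi' (u : ℝ) : Real.cot (u + Real.pi) = Real.cot u := by
  rw [Real.cot_eq_cos_div_sin, Real.cot_eq_cos_div_sin, Real.cos_add, Real.sin_add]
  simp [neg_div_neg_eq]

lemma tan_eq_neg_cot (u : ℝ) : Real.tan u = -Real.cot (u + Real.pi / 2) := by
  rw [Real.cot_eq_cos_div_sin, Real.cos_add_pi_div_two, Real.sin_add_pi_div_two,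
    Real.tan_eq_sin_div_cos, neg_div]
  ring

lemma sum_shift1 (n : ℕ) (g : ℕ → ℝ) (hg : g n = g 0) :
    ∑ j ∈ range n, g (j + 1) = ∑ j ∈ range n, g j := by
  have h1 := Finset.sum_range_succ' g n
  have h2 := Finset.sum_range_succ g n
  rw [h2] at h1
  linarith

lemma sum_shift (n : ℕ) (g : ℕ → ℝ) (hg : ∀ k, g (k + n) = g k) (m : ℕ) :
    ∑ j ∈ range n, g (j + m) = ∑ j ∈ range n, g j := by
  induction m with
  | zero => simp
  | succ m ih =>
    have h0 : ∑ j ∈ range n, g (j + (m + 1))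
        = ∑ j ∈ range n, (fun j => g (j + m)) (j + 1) := by
      refine Finset.sum_congr rfl fun j _ => ?_
      congr 1
      omega
    have hper : (fun j => g (j + m)) n = (fun j => g (j + m)) 0 := by
      show g (n + m) = g (0 + m)
      rw [Nat.zero_add, Nat.add_comm n m]
      exact hg m
    rw [h0, sum_shift1 n (fun j => g (j + m)) hper]
    exact ih

/-- −2m·cot(2m·a·t) = Σ_{j=0}^{2m−1} tan(a·t + jπ/(2m)). -/
theorem tan_multiple_angle (m : ℕ) (hm : 1 ≤ m) (a t : ℝ)
    (hs : Real.sin (2 * m * a * t) ≠ 0) :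
    -(2 * m * Real.cot (2 * m * a * t))
      = ∑ j ∈ Finset.range (2 * m), Real.tan (a * t + j * π / (2 * m)) := by
  have hm0 : (m : ℝ) ≠ 0 := Nat.cast_ne_zero.mpr (by omega)
  have hn : 0 < 2 * m := by omega
  set x := a * t with hx
  have harg : ((2 * m : ℕ) : ℝ) * x = 2 * m * a * t := by push_cast; ring
  have hs' : Real.sin (((2 * m : ℕ) : ℝ) * x) ≠ 0 := by rw [harg]; exact hs
  have key := sum_cot_r (2 * m) hn x hs'
  set g : ℕ → ℝ := fun k => Real.cot (x + k * π / ((2 * m : ℕ) : ℝ)) with hgdef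
  have hper : ∀ k, g (k + 2 * m) = g k := by
    intro k
    show Real.cot (x + ((k + 2 * m : ℕ) : ℝ) * π / ((2 * m : ℕ) : ℝ))
      = Real.cot (x + (k : ℝ) * π / ((2 * m : ℕ) : ℝ))
    have heq : x + ((k + 2 * m : ℕ) : ℝ) * π / ((2 * m : ℕ) : ℝ)
        = (x + (k : ℝ) * π / ((2 * m : ℕ) : ℝ)) + π := by
      push_cast
      field_simp
      ring
    rw [heq, cot_add_pi']
  have hshift : ∑ j ∈ range (2 * m), g (j + m) = ∑ j ∈ range (2 * m), g j :=
    sum_shift (2 * m) g hper m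
  have htan : ∀ j ∈ Finset.range (2 * m),
      Real.tan (x + j * π / (2 * (m : ℝ))) = -g (j + m) := by
    intro j _
    rw [tan_eq_neg_cot]
    have heq : x + (j : ℝ) * π / (2 * (m : ℝ)) + π / 2
        = x + ((j + m : ℕ) : ℝ) * π / ((2 * m : ℕ) : ℝ) := by
      push_cast
      field_simp
      ring
    rw [heq]
  have key2 : ∑ j ∈ Finset.range (2 * m), g j = 2 * (m : ℝ) * Real.cot (2 * m * a * t) := by
    rw [key, harg]
    push_cast
    ring
  rw [← key2, Finset.sum_congr rfl htan]
  rw [← hshift]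
  simp [Finset.sum_neg_distrib]
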